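/- Let a, b, n be positive integers with b < a < n, a + b + 1 ≡ 2bn (mod 4), and (a + b + 1)² > 4bn. Set s = (a + b + 1)/2 (an integer since a + b is odd). Then the sequence (a^s, b^{n−s}) has even sum, has length n, maximal element a, minimal element b, and is nongraphic. -/

import Mathlib

/-- A sequence of length `n` is graphic if it is the degree sequence of some
finite simple graph on `n` vertices. -/
def IsGraphic {n : ℕ} (d : Fin n → ℕ) : Prop :=
  ∃ G : SimpleGraph (Fin n), ∀ i, (G.neighborSet i).ncard = d i

/-- `twoBlock a b s : Fin n → ℕ` is the sequence `(a^s, b^{n-s})`. -/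
def twoBlock (a b s : ℕ) {n : ℕ} : Fin n → ℕ := fun i => if (i : ℕ) < s then a else b

lemma twoBlock_sum {a b s n : ℕ} (hsn : s ≤ n) :
    ∑ i : Fin n, twoBlock a b s i = s * a + (n - s) * b := by
  have h0 : (∑ i : Fin n, twoBlock a b s i)
      = ∑ k ∈ Finset.range n, (if k < s then a else b) :=
    Fin.sum_univ_eq_sum_range (fun k => if k < s then a else b) n
  rw [h0, Finset.range_eq_Ico, ← Finset.sum_Ico_consecutive _ (Nat.zero_le s) hsn]
  have h1 : ∑ k ∈ Finset.Ico 0 s, (if k < s then a else b) = s * a := by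
    rw [Finset.sum_congr rfl fun k hk => if_pos (Finset.mem_Ico.mp hk).2,
      Finset.sum_const, Nat.card_Ico, Nat.sub_zero, smul_eq_mul]
  have h2 : ∑ k ∈ Finset.Ico s n, (if k < s then a else b) = (n - s) * b := by
    rw [Finset.sum_congr rfl fun k hk =>
      if_neg (by exact Nat.not_lt.mpr (Finset.mem_Ico.mp hk).1),
      Finset.sum_const, Nat.card_Ico, smul_eq_mul]
  rw [h1, h2]

/-- Case (I) of sharpness: if `b < a < n`, `a + b + 1 ≡ 2bn (mod 4)` and
`(a+b+1)² > 4bn`, then with `s = (a+b+1)/2` the sequence `(a^s, b^{n-s})` has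
even sum, maximal element `a`, minimal element `b`, and is nongraphic. -/
theorem sharpness_case_I (a b n : ℕ) (hb : 0 < b) (hba : b < a) (han : a < n)
    (hmod : a + b + 1 ≡ 2 * b * n [MOD 4]) (hgt : (a + b + 1) ^ 2 > 4 * (b * n)) :
    Even (∑ i : Fin n, twoBlock a b ((a + b + 1) / 2) i) ∧
      twoBlock a b ((a + b + 1) / 2) (n := n) ⟨0, by omega⟩ = a ∧
      twoBlock a b ((a + b + 1) / 2) (n := n) ⟨n - 1, by omega⟩ = b ∧
      ¬ IsGraphic (twoBlock a b ((a + b + 1) / 2) (n := n)) := by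
  classical
  have hmod' : (a + b + 1) % 4 = (2 * (b * n)) % 4 := by
    have h : 2 * b * n = 2 * (b * n) := by ring
    rw [h] at hmod; exact hmod
  set s := (a + b + 1) / 2 with hsdef
  have h2s : 2 * s = a + b + 1 := by
    have h := hmod'; generalize b * n = t at h; omega
  have hspar : s % 2 = (b * n) % 2 := by
    have h := hmod'; generalize b * n = t at h ⊢; omega
  have hsa : s ≤ a := by omega
  have hs1 : 1 ≤ s := by omega
  have hsn : s < n := by omega
  refine ⟨?_, ?_, ?_, ?_⟩
  · rw [twoBlock_sum hsn.le]
    rcases Nat.even_or_odd b with hbe | hbo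
    · have h1 : Even ((n - s) * b) := hbe.mul_left _
      have hse : Even s := by
        have : (b * n) % 2 = 0 := Nat.even_iff.mp (hbe.mul_right n)
        rw [Nat.even_iff]; omega
      exact (hse.mul_right a).add h1
    · have hb2 : b % 2 = 1 := Nat.odd_iff.mp hbo
      have ha : Even a := by rw [Nat.even_iff]; omega
      have hbn2 : (b * n) % 2 = n % 2 := by
        rw [Nat.mul_mod, hb2, one_mul, Nat.mod_mod_of_dvd _ (dvd_refl 2)]
      have hns : Even (n - s) := by rw [Nat.even_iff]; omega
      exact (ha.mul_left s).add (hns.mul_right b)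
  · simp only [twoBlock]
    rw [if_pos]; omega
  · simp only [twoBlock]
    rw [if_neg]; omega
  · rintro ⟨G, hG⟩
    have hdeg : ∀ i, G.degree i = twoBlock a b s i := by
      intro i
      rw [← hG i, Set.ncard_eq_toFinset_card', Set.toFinset_card,
        SimpleGraph.card_neighborSet_eq_degree]
    set S : Finset (Fin n) := Finset.univ.filter (fun i : Fin n => (i : ℕ) < s) with hS
    have hScard : S.card = s := by
      have : S.card = ∑ i : Fin n, twoBlock 1 0 s i := by
        rw [Finset.card_filter]
        exact Finset.sum_congr rfl fun i _ => by simp [twoBlock]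
      rw [this, twoBlock_sum hsn.le]; omega
    have hSccard : Sᶜ.card = n - s := by
      rw [Finset.card_compl, hScard]; simp
    -- f i j = 1 if adjacent
    set f : Fin n → Fin n → ℕ := fun i j => if G.Adj i j then 1 else 0 with hf
    have hdeg' : ∀ i, ∑ j, f i j = G.degree i := by
      intro i
      rw [SimpleGraph.degree, SimpleGraph.neighborFinset_eq_filter, Finset.card_filter]
    have hmain : s * a ≤ s * (s - 1) + (n - s) * b := by
      have step1 : ∑ i ∈ S, G.degree i = s * a := by
        have hconst : ∀ i ∈ S, G.degree i = a := by
          intro i hi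
          rw [hdeg i]
          simp only [twoBlock]
          exact if_pos (by simpa [hS] using hi)
        calc ∑ i ∈ S, G.degree i = ∑ _i ∈ S, a := Finset.sum_congr rfl hconst
          _ = s * a := by rw [Finset.sum_const, hScard, smul_eq_mul]
      have step2 : ∀ i, ∑ j, f i j = ∑ j ∈ S, f i j + ∑ j ∈ Sᶜ, f i j := by
        intro i; rw [Finset.sum_add_sum_compl]
      have boundA : ∀ i ∈ S, ∑ j ∈ S, f i j ≤ s - 1 := by
        intro i hi
        have : ∑ j ∈ S, f i j = (S.filter (fun j => G.Adj i j)).card := by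
          rw [Finset.card_filter]
        rw [this]
        have hsub : S.filter (fun j => G.Adj i j) ⊆ S.erase i := by
          intro j hj
          rw [Finset.mem_filter] at hj
          exact Finset.mem_erase.mpr ⟨fun h => G.loopless.irrefl i (h ▸ hj.2), hj.1⟩
        calc (S.filter (fun j => G.Adj i j)).card ≤ (S.erase i).card :=
              Finset.card_le_card hsub
          _ = s - 1 := by rw [Finset.card_erase_of_mem hi, hScard]
      have boundB : ∀ j ∈ Sᶜ, ∑ i ∈ S, f i j ≤ b := by
        intro j hj
        have h1 : ∑ i ∈ S, f i j ≤ ∑ i : Fin n, f j i := by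
          calc ∑ i ∈ S, f i j = ∑ i ∈ S, f j i := by
                refine Finset.sum_congr rfl fun i _ => ?_
                simp only [hf, SimpleGraph.adj_comm]
            _ ≤ ∑ i : Fin n, f j i := by
                refine Finset.sum_le_sum_of_subset (Finset.subset_univ S)
        have h2 : G.degree j = b := by
          rw [hdeg j]
          simp only [twoBlock]
          rw [if_neg]
          have := Finset.mem_compl.mp hj
          simp [hS] at this
          omega
        rw [hdeg'] at h1; omega
      calc s * a = ∑ i ∈ S, G.degree i := step1.symm
        _ = ∑ i ∈ S, (∑ j ∈ S, f i j + ∑ j ∈ Sᶜ, f i j) := by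
            refine Finset.sum_congr rfl fun i _ => ?_
            rw [← step2, hdeg']
        _ = (∑ i ∈ S, ∑ j ∈ S, f i j) + ∑ i ∈ S, ∑ j ∈ Sᶜ, f i j := by
            rw [Finset.sum_add_distrib]
        _ = (∑ i ∈ S, ∑ j ∈ S, f i j) + ∑ j ∈ Sᶜ, ∑ i ∈ S, f i j := by
            congr 1
            exact Finset.sum_comm
        _ ≤ (∑ _i ∈ S, (s - 1)) + ∑ _j ∈ Sᶜ, b := by
            exact Nat.add_le_add (Finset.sum_le_sum boundA) (Finset.sum_le_sum boundB)
        _ = s * (s - 1) + (n - s) * b := by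
            rw [Finset.sum_const, Finset.sum_const, hScard, hSccard, smul_eq_mul, smul_eq_mul]
    -- derive contradiction
    have hmainZ : (s : ℤ) * a ≤ s * (s - 1) + (n - s) * b := by
      have := hmain
      zify [hs1, hsn.le] at this
      exact this
    have h2sZ : (2 : ℤ) * s = a + b + 1 := by exact_mod_cast h2s
    have hgtZ : ((a : ℤ) + b + 1) ^ 2 > 4 * (b * n) := by exact_mod_cast hgt
    nlinarith [hmainZ, h2sZ, hgtZ]
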